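/- If P(Z_1 > x) = x^{−β} L(x)(1+o(1)) as x → ∞ with 1 < β < 2 and γ > β − 1, then for every ε > 0, lim_{n→∞} m^{(β−1)n} L(m^n)^{−1} P(m − Z_{n+1}/Z_n ≥ ε) = 0. -/

import Mathlib

open MeasureTheory ProbabilityTheory Filter Set
open scoped Topology ENNReal

/-- Convolution of two measures on `ℝ` (law of the sum of independent random variables). -/
noncomputable def mconv (ν₁ ν₂ : Measure ℝ) : Measure ℝ :=
  (ν₁.prod ν₂).map (fun p => p.1 + p.2)

namespace LNaux
set_option linter.unusedSectionVars false
set_option linter.unusedVariables false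

variable {Ω : Type} [MeasurableSpace Ω] {μ : Measure Ω} [IsProbabilityMeasure μ]

lemma integrable_bdd01 {f : Ω → ℝ} (hf : Measurable f) (h0 : ∀ w, 0 ≤ f w)
    (h1 : ∀ w, f w ≤ 1) : Integrable f μ := by
  refine (integrable_const (1:ℝ)).mono' hf.aestronglyMeasurable ?_
  filter_upwards with w
  rw [Real.norm_eq_abs, abs_of_nonneg (h0 w)]; exact h1 w

/-- block σ-algebra -/
def blk (ξ : ℕ → ℕ → Ω → ℕ) (S : Set (ℕ × ℕ)) : MeasurableSpace Ω :=
  ⨆ p ∈ S, MeasurableSpace.comap (ξ p.1 p.2) inferInstance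

lemma meas_xi_blk (ξ : ℕ → ℕ → Ω → ℕ) {S : Set (ℕ × ℕ)} {a b : ℕ} (hp : (a, b) ∈ S) :
    Measurable[blk ξ S] (ξ a b) := by
  rw [measurable_iff_comap_le]
  exact le_biSup (f := fun p : ℕ × ℕ => MeasurableSpace.comap (ξ p.1 p.2) inferInstance) hp

lemma blk_mono (ξ : ℕ → ℕ → Ω → ℕ) {S T : Set (ℕ × ℕ)} (h : S ⊆ T) : blk ξ S ≤ blk ξ T :=
  biSup_mono h

lemma blk_le (ξ : ℕ → ℕ → Ω → ℕ) (hξmeas : ∀ n i, Measurable (ξ n i)) (S : Set (ℕ × ℕ)) :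
    blk ξ S ≤ ‹MeasurableSpace Ω› := by
  refine iSup_le fun p => iSup_le fun _ => ?_
  exact measurable_iff_comap_le.mp (hξmeas p.1 p.2)

lemma indepFun_blocks (ξ : ℕ → ℕ → Ω → ℕ) (hξmeas : ∀ n i, Measurable (ξ n i))
    (hξiid : iIndepFun (fun ni : ℕ × ℕ => ξ ni.1 ni.2) μ)
    {S T : Set (ℕ × ℕ)} (hST : Disjoint S T)
    {α α' : Type*} [MeasurableSpace α] [MeasurableSpace α']
    {f : Ω → α} {g : Ω → α'}
    (hf : Measurable[blk ξ S] f) (hg : Measurable[blk ξ T] g) :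
    IndepFun f g μ := by
  have hI : iIndep (fun p : ℕ × ℕ =>
      MeasurableSpace.comap (ξ p.1 p.2) inferInstance) μ := hξiid.iIndep
  have h := indep_iSup_of_disjoint
    (fun p : ℕ × ℕ => measurable_iff_comap_le.mp (hξmeas p.1 p.2)) hI hST
  rw [IndepFun_iff_Indep]
  exact indep_of_indep_of_le_right
    (indep_of_indep_of_le_left h (measurable_iff_comap_le.mp hf))
    (measurable_iff_comap_le.mp hg)

lemma meas_sum_blk (ξ : ℕ → ℕ → Ω → ℕ) (n k : ℕ) {S : Set (ℕ × ℕ)}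
    (hS : ∀ i, i < k → (n, i) ∈ S) :
    Measurable[blk ξ S] (fun w => ∑ i ∈ Finset.range k, ξ n i w) := by
  refine Finset.measurable_sum _ (fun i hi => ?_)
  exact meas_xi_blk ξ (hS i (Finset.mem_range.mp hi))

-- Z n is measurable wrt history block
lemma meas_Z_blk (ξ : ℕ → ℕ → Ω → ℕ) (Z : ℕ → Ω → ℕ) (hZ0 : ∀ w, Z 0 w = 1)
    (hZrec : ∀ n w, Z (n + 1) w = ∑ i ∈ Finset.range (Z n w), ξ n i w) (n : ℕ) :
    Measurable[blk ξ {q : ℕ × ℕ | q.1 < n}] (Z n) := by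
  induction n with
  | zero =>
      have : Z 0 = fun _ => 1 := funext hZ0
      rw [this]; exact measurable_const
  | succ n ih =>
      letI M := blk ξ {q : ℕ × ℕ | q.1 < n + 1}
      have hZn : Measurable[M] (Z n) :=
        ih.mono (blk_mono ξ (fun q hq => lt_trans hq (Nat.lt_succ_self n))) le_rfl
      have hF : Measurable[MeasurableSpace.prod M inferInstance]
          (fun kw : Ω × ℕ => ∑ i ∈ Finset.range kw.2, ξ n i kw.1) := by
        refine measurable_from_prod_countable_left (fun k => ?_)
        exact meas_sum_blk ξ n k (fun i _ => Nat.lt_succ_self n)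
      have : Z (n + 1) = (fun kw : Ω × ℕ => ∑ i ∈ Finset.range kw.2, ξ n i kw.1)
          ∘ (fun w => (w, Z n w)) := by
        funext w; simp [hZrec n w]
      rw [this]
      exact hF.comp (Measurable.prodMk measurable_id hZn)

lemma meas_Z (ξ : ℕ → ℕ → Ω → ℕ) (hξmeas : ∀ n i, Measurable (ξ n i))
    (Z : ℕ → Ω → ℕ) (hZ0 : ∀ w, Z 0 w = 1)
    (hZrec : ∀ n w, Z (n + 1) w = ∑ i ∈ Finset.range (Z n w), ξ n i w) (n : ℕ) :
    Measurable (Z n) := by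
  refine (meas_Z_blk ξ Z hZ0 hZrec n).mono ?_ le_rfl
  refine iSup_le fun p => iSup_le fun _ => measurable_iff_comap_le.mp (hξmeas p.1 p.2)

lemma map_xi_eq (ξ : ℕ → ℕ → Ω → ℕ) (hξmeas : ∀ n i, Measurable (ξ n i))
    (p : ℕ → ℝ) (hξdist : ∀ n i k, (μ {w | ξ n i w = k}).toReal = p k) (n i : ℕ) :
    μ.map (ξ n i) = μ.map (ξ 0 0) := by
  apply MeasureTheory.Measure.ext_of_singleton
  intro k
  rw [Measure.map_apply (hξmeas n i) (measurableSet_singleton k),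
      Measure.map_apply (hξmeas 0 0) (measurableSet_singleton k)]
  have h1 : (μ (ξ n i ⁻¹' {k})).toReal = p k := hξdist n i k
  have h2 : (μ (ξ 0 0 ⁻¹' {k})).toReal = p k := hξdist 0 0 k
  exact (ENNReal.toReal_eq_toReal_iff' (measure_ne_top μ _) (measure_ne_top μ _)).mp
    (h1.trans h2.symm)

lemma integral_comp_xi (ξ : ℕ → ℕ → Ω → ℕ) (hξmeas : ∀ n i, Measurable (ξ n i))
    (p : ℕ → ℝ) (hξdist : ∀ n i k, (μ {w | ξ n i w = k}).toReal = p k) (n i : ℕ)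
    (φ : ℕ → ℝ) :
    ∫ w, φ (ξ n i w) ∂μ = ∫ w, φ (ξ 0 0 w) ∂μ := by
  rw [← integral_map (hξmeas n i).aemeasurable
    (Measurable.of_discrete (f := φ)).aestronglyMeasurable,
    ← integral_map (hξmeas 0 0).aemeasurable
    (Measurable.of_discrete (f := φ)).aestronglyMeasurable,
    map_xi_eq ξ hξmeas p hξdist n i]

variable {ξ00 : Ω → ℕ}

lemma g_nonneg {s : ℝ} (hs : 0 ≤ s) : 0 ≤ ∫ w, s ^ ξ00 w ∂μ :=
  integral_nonneg (fun w => pow_nonneg hs _)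

lemma g_le_one (hm : Measurable ξ00) {s : ℝ} (hs0 : 0 ≤ s) (hs1 : s ≤ 1) :
    ∫ w, s ^ ξ00 w ∂μ ≤ 1 := by
  calc ∫ w, s ^ ξ00 w ∂μ ≤ ∫ _, (1:ℝ) ∂μ := by
        refine integral_mono (integrable_bdd01 (measurable_const.pow hm)
          (fun w => pow_nonneg hs0 _) (fun w => pow_le_one₀ hs0 hs1)) (integrable_const 1)
          (fun w => pow_le_one₀ hs0 hs1)
      _ = 1 := by simp

lemma g_mono (hm : Measurable ξ00) {s t : ℝ} (hs0 : 0 ≤ s) (hst : s ≤ t) (ht1 : t ≤ 1) :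
    ∫ w, s ^ ξ00 w ∂μ ≤ ∫ w, t ^ ξ00 w ∂μ := by
  refine integral_mono (integrable_bdd01 (measurable_const.pow hm) (fun w => pow_nonneg hs0 _)
      (fun w => pow_le_one₀ hs0 (hst.trans ht1)))
    (integrable_bdd01 (measurable_const.pow hm) (fun w => pow_nonneg (hs0.trans hst) _)
      (fun w => pow_le_one₀ (hs0.trans hst) ht1))
    (fun w => pow_le_pow_left₀ hs0 hst _)

lemma g_le_self (hm : Measurable ξ00) (hae : ∀ᵐ w ∂μ, 1 ≤ ξ00 w)
    {s : ℝ} (hs0 : 0 ≤ s) (hs1 : s ≤ 1) :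
    ∫ w, s ^ ξ00 w ∂μ ≤ s := by
  have : ∫ w, s ^ ξ00 w ∂μ ≤ ∫ _, s ∂μ := by
    refine integral_mono_ae (integrable_bdd01 (measurable_const.pow hm) (fun w => pow_nonneg hs0 _)
      (fun w => pow_le_one₀ hs0 hs1)) (integrable_const s) ?_
    filter_upwards [hae] with w hw
    calc s ^ ξ00 w ≤ s ^ 1 := pow_le_pow_of_le_one hs0 hs1 hw
      _ = s := pow_one s
  simpa using this

lemma g_quad (hm : Measurable ξ00) {p1 : ℝ}
    (hA1 : (μ {w | ξ00 w = 1}).toReal = p1) (hA0 : μ {w | ξ00 w = 0} = 0)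
    {s : ℝ} (hs0 : 0 ≤ s) (hs1 : s ≤ 1) :
    ∫ w, s ^ ξ00 w ∂μ ≤ s * (p1 + (1 - p1) * s) := by
  set A1 : Set Ω := {w | ξ00 w = 1} with hA1def
  set A2 : Set Ω := {w | 2 ≤ ξ00 w} with hA2def
  have mA1 : MeasurableSet A1 := hm (measurableSet_singleton 1)
  have mA2 : MeasurableSet A2 := hm measurableSet_Ici
  have hdisj : Disjoint A1 A2 := by
    rw [Set.disjoint_left]; intro w h1 h2; simp only [hA1def, hA2def, mem_setOf_eq] at h1 h2; omega
  have hunion : A1 ∪ A2 = {w | ξ00 w = 0}ᶜ := by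
    ext w; simp only [hA1def, hA2def, mem_union, mem_setOf_eq, mem_compl_iff]; omega
  have hsum : (μ A2).toReal = 1 - p1 := by
    have h2 : μ (A1 ∪ A2) = 1 := by
      rw [hunion, measure_compl (s := {w | ξ00 w = 0}) (hm (measurableSet_singleton 0)) (measure_ne_top μ _), hA0]
      simp
    have h3 : μ A1 + μ A2 = 1 := by rw [← measure_union hdisj mA2, h2]
    have h4 : (μ A1).toReal + (μ A2).toReal = 1 := by
      rw [← ENNReal.toReal_add (measure_ne_top μ _) (measure_ne_top μ _), h3]; simp
    linarith [hA1 ▸ h4]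
  -- pointwise bound a.e.
  have hptw : ∀ᵐ w ∂μ, s ^ ξ00 w ≤
      A1.indicator (fun _ => s) w + A2.indicator (fun _ => s ^ 2) w := by
    have hae : ∀ᵐ w ∂μ, ¬ (ξ00 w = 0) := by
      rw [ae_iff]; simpa using hA0
    filter_upwards [hae] with w hw
    rcases Nat.lt_or_ge (ξ00 w) 2 with h | h
    · have h1 : ξ00 w = 1 := by omega
      have : w ∈ A1 := h1
      rw [Set.indicator_of_mem this, Set.indicator_of_notMem (by simp [hA2def]; omega), h1]
      simp
    · have : w ∈ A2 := h
      rw [Set.indicator_of_mem this, Set.indicator_of_notMem (by simp [hA1def]; omega)]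
      have : s ^ ξ00 w ≤ s ^ 2 := pow_le_pow_of_le_one hs0 hs1 h
      linarith
  have hint : ∫ w, s ^ ξ00 w ∂μ ≤
      ∫ w, (A1.indicator (fun _ => s) w + A2.indicator (fun _ => s ^ 2) w) ∂μ := by
    refine integral_mono_ae (integrable_bdd01 (measurable_const.pow hm) (fun w => pow_nonneg hs0 _)
      (fun w => pow_le_one₀ hs0 hs1))
      (((integrable_const s).indicator mA1).add ((integrable_const (s^2)).indicator mA2)) hptw
  rw [integral_add ((integrable_const s).indicator mA1) ((integrable_const (s^2)).indicator mA2),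
    integral_indicator_const _ mA1, integral_indicator_const _ mA2] at hint
  calc ∫ w, s ^ ξ00 w ∂μ ≤ (μ A1).toReal • s + (μ A2).toReal • s ^ 2 := hint
    _ = s * (p1 + (1 - p1) * s) := by rw [hA1, hsum, smul_eq_mul, smul_eq_mul]; ring


-- product formula, chernoff, integral_comp_Z
lemma integral_pow_sum (ξ : ℕ → ℕ → Ω → ℕ) (hξmeas : ∀ n i, Measurable (ξ n i))
    (hξiid : iIndepFun (fun ni : ℕ × ℕ => ξ ni.1 ni.2) μ)
    (p : ℕ → ℝ) (hξdist : ∀ n i k, (μ {w | ξ n i w = k}).toReal = p k)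
    {s : ℝ} (hs0 : 0 ≤ s) (hs1 : s ≤ 1) (n k : ℕ) :
    ∫ w, s ^ (∑ i ∈ Finset.range k, ξ n i w) ∂μ = (∫ w, s ^ ξ 0 0 w ∂μ) ^ k := by
  induction k with
  | zero => simp
  | succ k ih =>
      have hind : IndepFun (fun w => ∑ i ∈ Finset.range k, ξ n i w) (ξ n k) μ := by
        refine indepFun_blocks ξ hξmeas hξiid
          (S := {q : ℕ × ℕ | q.1 = n ∧ q.2 < k}) (T := {(n, k)}) ?_ ?_ ?_
        · rw [Set.disjoint_left]; rintro ⟨a, b⟩ ⟨h1, h2⟩ h3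
          simp only [mem_singleton_iff, Prod.mk.injEq] at h3
          omega
        · exact meas_sum_blk ξ n k (fun i hi => ⟨rfl, hi⟩)
        · exact meas_xi_blk ξ rfl
      have hcomp : IndepFun (fun w => s ^ (∑ i ∈ Finset.range k, ξ n i w))
          (fun w => s ^ ξ n k w) μ :=
        hind.comp (Measurable.of_discrete (f := fun j : ℕ => s ^ j))
          (Measurable.of_discrete (f := fun j : ℕ => s ^ j))
      have hmsum : Measurable (fun w => ∑ i ∈ Finset.range k, ξ n i w) :=
        Finset.measurable_sum _ (fun i _ => hξmeas n i)
      have int1 : Integrable (fun w => s ^ (∑ i ∈ Finset.range k, ξ n i w)) μ :=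
        integrable_bdd01 (measurable_const.pow hmsum) (fun w => pow_nonneg hs0 _)
          (fun w => pow_le_one₀ hs0 hs1)
      have int2 : Integrable (fun w => s ^ ξ n k w) μ :=
        integrable_bdd01 (measurable_const.pow (hξmeas n k)) (fun w => pow_nonneg hs0 _)
          (fun w => pow_le_one₀ hs0 hs1)
      have h1 : (fun w => s ^ (∑ i ∈ Finset.range (k+1), ξ n i w)) =
          fun w => (s ^ (∑ i ∈ Finset.range k, ξ n i w)) * s ^ ξ n k w := by
        funext w; rw [Finset.sum_range_succ, pow_add]
      have hxi : ∫ w, s ^ ξ n k w ∂μ = ∫ w, s ^ ξ 0 0 w ∂μ :=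
        integral_comp_xi ξ hξmeas p hξdist n k (fun j => s ^ j)
      calc ∫ w, s ^ (∑ i ∈ Finset.range (k+1), ξ n i w) ∂μ
          = ∫ w, (s ^ (∑ i ∈ Finset.range k, ξ n i w)) * s ^ ξ n k w ∂μ := by rw [h1]
        _ = (∫ w, s ^ (∑ i ∈ Finset.range k, ξ n i w) ∂μ) * ∫ w, s ^ ξ n k w ∂μ :=
            hcomp.integral_fun_mul_eq_mul_integral int1.1 int2.1
        _ = (∫ w, s ^ ξ 0 0 w ∂μ) ^ (k+1) := by rw [ih, hxi, pow_succ]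

lemma chernoff (ξ : ℕ → ℕ → Ω → ℕ) (hξmeas : ∀ n i, Measurable (ξ n i))
    (hξiid : iIndepFun (fun ni : ℕ × ℕ => ξ ni.1 ni.2) μ)
    (p : ℕ → ℝ) (hξdist : ∀ n i k, (μ {w | ξ n i w = k}).toReal = p k)
    {s : ℝ} (hs0 : 0 < s) (hs1 : s < 1) (c : ℝ) (n k : ℕ) :
    (μ {w | ((∑ i ∈ Finset.range k, ξ n i w : ℕ) : ℝ) ≤ c * k}).toReal ≤
      ((∫ w, s ^ ξ 0 0 w ∂μ) / s ^ c) ^ k := by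
  set Y : Ω → ℝ := fun w => s ^ (∑ i ∈ Finset.range k, ξ n i w) with hY
  have hmsum : Measurable (fun w => ∑ i ∈ Finset.range k, ξ n i w) :=
    Finset.measurable_sum _ (fun i _ => hξmeas n i)
  have hYint : Integrable Y μ :=
    integrable_bdd01 (measurable_const.pow hmsum) (fun w => pow_nonneg hs0.le _)
      (fun w => pow_le_one₀ hs0.le hs1.le)
  have hsub : {w | ((∑ i ∈ Finset.range k, ξ n i w : ℕ) : ℝ) ≤ c * k} ⊆
      {w | s ^ (c * k) ≤ Y w} := by
    intro w hw
    have : s ^ (c * (k:ℝ)) ≤ s ^ ((∑ i ∈ Finset.range k, ξ n i w : ℕ) : ℝ) :=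
      Real.rpow_le_rpow_of_exponent_ge hs0 hs1.le hw
    rwa [Real.rpow_natCast] at this
  have hM := mul_meas_ge_le_integral_of_nonneg
    (ae_of_all μ (fun w => pow_nonneg hs0.le _ : ∀ w, 0 ≤ Y w)) hYint (s ^ (c * (k:ℝ)))
  have hle : (μ {w | ((∑ i ∈ Finset.range k, ξ n i w : ℕ) : ℝ) ≤ c * k}).toReal ≤
      (μ {w | s ^ (c * (k:ℝ)) ≤ Y w}).toReal :=
    ENNReal.toReal_mono (measure_ne_top μ _) (measure_mono hsub)
  have hint : ∫ w, Y w ∂μ = (∫ w, s ^ ξ 0 0 w ∂μ) ^ k :=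
    integral_pow_sum ξ hξmeas hξiid p hξdist hs0.le hs1.le n k
  have hpow : (0:ℝ) < s ^ (c * (k:ℝ)) := Real.rpow_pos_of_pos hs0 _
  have key : s ^ (c * (k:ℝ)) * (μ {w | ((∑ i ∈ Finset.range k, ξ n i w : ℕ) : ℝ) ≤ c * k}).toReal
      ≤ (∫ w, s ^ ξ 0 0 w ∂μ) ^ k := by
    calc s ^ (c * (k:ℝ)) * (μ _).toReal ≤ s ^ (c * (k:ℝ)) * (μ {w | s ^ (c * (k:ℝ)) ≤ Y w}).toReal :=
          by exact mul_le_mul_of_nonneg_left hle hpow.le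
      _ ≤ ∫ w, Y w ∂μ := hM
      _ = _ := hint
  have hratio : ((∫ w, s ^ ξ 0 0 w ∂μ) / s ^ c) ^ k =
      (∫ w, s ^ ξ 0 0 w ∂μ) ^ k / s ^ (c * (k:ℝ)) := by
    rw [div_pow, ← Real.rpow_natCast (s ^ c) k, ← Real.rpow_mul hs0.le]
  rw [hratio, le_div_iff₀ hpow, mul_comm]
  exact key

lemma integral_comp_Z {Zn : Ω → ℕ} (hZm : Measurable Zn) (f : ℕ → ℝ)
    (hf0 : ∀ k, 0 ≤ f k) (hf1 : ∀ k, f k ≤ 1) :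
    ∫ w, f (Zn w) ∂μ = ∑' k, (μ {w | Zn w = k}).toReal * f k := by
  haveI : IsProbabilityMeasure (μ.map Zn) := Measure.isProbabilityMeasure_map hZm.aemeasurable
  rw [← integral_map hZm.aemeasurable (Measurable.of_discrete (f := f)).aestronglyMeasurable,
    integral_countable' (integrable_bdd01 (Measurable.of_discrete (f := f)) hf0 hf1)]
  congr 1; funext k
  rw [measureReal_def, Measure.map_apply hZm (measurableSet_singleton k), smul_eq_mul]
  rfl

lemma G_rec (ξ : ℕ → ℕ → Ω → ℕ) (hξmeas : ∀ n i, Measurable (ξ n i))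
    (hξiid : iIndepFun (fun ni : ℕ × ℕ => ξ ni.1 ni.2) μ)
    (p : ℕ → ℝ) (hξdist : ∀ n i k, (μ {w | ξ n i w = k}).toReal = p k)
    (Z : ℕ → Ω → ℕ) (hZ0 : ∀ w, Z 0 w = 1)
    (hZrec : ∀ n w, Z (n + 1) w = ∑ i ∈ Finset.range (Z n w), ξ n i w)
    {s : ℝ} (hs0 : 0 ≤ s) (hs1 : s ≤ 1) (n : ℕ) :
    ∫ w, s ^ (Z (n+1) w) ∂μ = ∫ w, (∫ v, s ^ ξ 0 0 v ∂μ) ^ (Z n w) ∂μ := by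
  set g : ℝ := ∫ v, s ^ ξ 0 0 v ∂μ with hgdef
  have hg0 : 0 ≤ g := g_nonneg hs0
  have hg1 : g ≤ 1 := g_le_one (hξmeas 0 0) hs0 hs1
  have hZm : Measurable (Z n) := meas_Z ξ hξmeas Z hZ0 hZrec n
  have hZm1 : Measurable (Z (n+1)) := meas_Z ξ hξmeas Z hZ0 hZrec (n+1)
  set A : ℕ → Set Ω := fun k => {w | Z n w = k} with hA
  have mA : ∀ k, MeasurableSet (A k) := fun k => hZm (measurableSet_singleton k)
  have hdisj : Pairwise (Function.onFun Disjoint A) := by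
    intro i j hij
    rw [Function.onFun, Set.disjoint_left]
    intro w h1 h2; exact hij ((h1 : Z n w = i).symm.trans h2)
  have hU : ⋃ k, A k = univ := by
    ext w; simp [hA]
  have hint : Integrable (fun w => s ^ (Z (n+1) w)) μ :=
    integrable_bdd01 (measurable_const.pow hZm1) (fun w => pow_nonneg hs0 _)
      (fun w => pow_le_one₀ hs0 hs1)
  have step1 : ∫ w, s ^ (Z (n+1) w) ∂μ = ∑' k, ∫ w in A k, s ^ (Z (n+1) w) ∂μ := by
    rw [← setIntegral_univ, ← hU, integral_iUnion mA hdisj (hU ▸ hint.integrableOn)]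
  have step2 : ∀ k, ∫ w in A k, s ^ (Z (n+1) w) ∂μ = (μ (A k)).toReal * g ^ k := by
    intro k
    have hEq : ∀ w ∈ A k, s ^ (Z (n+1) w) = s ^ (∑ i ∈ Finset.range k, ξ n i w) := by
      intro w hw; rw [hZrec n w, (hw : Z n w = k)]
    rw [setIntegral_congr_fun (mA k) hEq]
    -- indicator as product
    have hXY : ∀ w, (A k).indicator (fun w => s ^ (∑ i ∈ Finset.range k, ξ n i w)) w =
        ((fun j : ℕ => if j = k then (1:ℝ) else 0) ∘ Z n) w *
          ((fun j : ℕ => s ^ j) ∘ (fun w => ∑ i ∈ Finset.range k, ξ n i w)) w := by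
      intro w
      by_cases hw : Z n w = k <;>
        simp [Set.indicator_apply, hA, Function.comp, hw]
    have hind : IndepFun (Z n) (fun w => ∑ i ∈ Finset.range k, ξ n i w) μ := by
      refine indepFun_blocks ξ hξmeas hξiid
        (S := {q : ℕ × ℕ | q.1 < n}) (T := {q : ℕ × ℕ | q.1 = n}) ?_ ?_ ?_
      · rw [Set.disjoint_left]; rintro ⟨a, b⟩ h1 h2
        simp only [mem_setOf_eq] at h1 h2; omega
      · exact meas_Z_blk ξ Z hZ0 hZrec n
      · exact meas_sum_blk ξ n k (fun i _ => rfl)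
    have hcomp : IndepFun ((fun j : ℕ => if j = k then (1:ℝ) else 0) ∘ Z n)
        ((fun j : ℕ => s ^ j) ∘ (fun w => ∑ i ∈ Finset.range k, ξ n i w)) μ :=
      hind.comp Measurable.of_discrete Measurable.of_discrete
    have hmsum : Measurable (fun w => ∑ i ∈ Finset.range k, ξ n i w) :=
      Finset.measurable_sum _ (fun i _ => hξmeas n i)
    have int1 : Integrable ((fun j : ℕ => if j = k then (1:ℝ) else 0) ∘ Z n) μ := by
      refine integrable_bdd01 (Measurable.of_discrete.comp hZm) ?_ ?_ <;>
        (intro w; simp only [Function.comp]; split <;> norm_num)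
    have int2 : Integrable ((fun j : ℕ => s ^ j) ∘ (fun w => ∑ i ∈ Finset.range k, ξ n i w)) μ :=
      integrable_bdd01 (measurable_const.pow hmsum) (fun w => pow_nonneg hs0 _)
        (fun w => pow_le_one₀ hs0 hs1)
    have e1 : ∫ w, ((fun j : ℕ => if j = k then (1:ℝ) else 0) ∘ Z n) w ∂μ = (μ (A k)).toReal := by
      have hptw : ∀ w, ((fun j : ℕ => if j = k then (1:ℝ) else 0) ∘ Z n) w =
          (A k).indicator (fun _ => (1:ℝ)) w := by
        intro w; by_cases hw : Z n w = k <;> simp [Set.indicator_apply, hA, Function.comp, hw]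
      rw [integral_congr_ae (ae_of_all μ hptw), integral_indicator_const _ (mA k),
        smul_eq_mul, mul_one]
      rfl
    have e2 : ∫ w, ((fun j : ℕ => s ^ j) ∘ (fun w => ∑ i ∈ Finset.range k, ξ n i w)) w ∂μ
        = g ^ k := by
      simpa [Function.comp] using integral_pow_sum ξ hξmeas hξiid p hξdist hs0 hs1 n k
    calc ∫ w in A k, s ^ (∑ i ∈ Finset.range k, ξ n i w) ∂μ
        = ∫ w, (A k).indicator (fun w => s ^ (∑ i ∈ Finset.range k, ξ n i w)) w ∂μ :=
          (integral_indicator (mA k)).symm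
      _ = ∫ w, ((fun j : ℕ => if j = k then (1:ℝ) else 0) ∘ Z n) w *
            ((fun j : ℕ => s ^ j) ∘ (fun w => ∑ i ∈ Finset.range k, ξ n i w)) w ∂μ :=
          integral_congr_ae (ae_of_all μ hXY)
      _ = (∫ w, ((fun j : ℕ => if j = k then (1:ℝ) else 0) ∘ Z n) w ∂μ) *
            ∫ w, ((fun j : ℕ => s ^ j) ∘ (fun w => ∑ i ∈ Finset.range k, ξ n i w)) w ∂μ :=
          hcomp.integral_fun_mul_eq_mul_integral int1.1 int2.1
      _ = (μ (A k)).toReal * g ^ k := by rw [e1, e2]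
  calc ∫ w, s ^ (Z (n+1) w) ∂μ = ∑' k, (μ (A k)).toReal * g ^ k := by
        rw [step1]; exact tsum_congr step2
    _ = ∫ w, g ^ (Z n w) ∂μ := by
        rw [integral_comp_Z hZm (fun k => g ^ k) (fun k => pow_nonneg hg0 _)
          (fun k => pow_le_one₀ hg0 hg1)]

lemma G_iterate (ξ : ℕ → ℕ → Ω → ℕ) (hξmeas : ∀ n i, Measurable (ξ n i))
    (hξiid : iIndepFun (fun ni : ℕ × ℕ => ξ ni.1 ni.2) μ)
    (p : ℕ → ℝ) (hξdist : ∀ n i k, (μ {w | ξ n i w = k}).toReal = p k)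
    (Z : ℕ → Ω → ℕ) (hZ0 : ∀ w, Z 0 w = 1)
    (hZrec : ∀ n w, Z (n + 1) w = ∑ i ∈ Finset.range (Z n w), ξ n i w)
    (n : ℕ) : ∀ s : ℝ, 0 ≤ s → s ≤ 1 →
    ∫ w, s ^ (Z n w) ∂μ = (fun u => ∫ v, u ^ ξ 0 0 v ∂μ)^[n] s := by
  induction n with
  | zero =>
      intro s hs0 hs1
      simp only [Function.iterate_zero, id_eq]
      have : (fun w => s ^ Z 0 w) = fun _ => s := by funext w; rw [hZ0 w, pow_one]
      rw [this, integral_const]; simp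
  | succ n ih =>
      intro s hs0 hs1
      rw [G_rec ξ hξmeas hξiid p hξdist Z hZ0 hZrec hs0 hs1 n,
        ih _ (g_nonneg hs0) (g_le_one (hξmeas 0 0) hs0 hs1),
        Function.iterate_succ_apply]

-- choice of s0 via dominated convergence
lemma exists_s0 {ξ00 : Ω → ℕ} (hm : Measurable ξ00)
    (hint : Integrable (fun w => (ξ00 w : ℝ)) μ)
    {mval : ℝ} (hmval : ∫ w, (ξ00 w : ℝ) ∂μ = mval) {ε : ℝ} (hε : 0 < ε) :
    ∃ s0 : ℝ, 0 < s0 ∧ s0 < 1 ∧ ∫ w, s0 ^ ξ00 w ∂μ < s0 ^ (mval - ε) := by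
  have hDCT : Tendsto (fun t : ℝ => ∫ w, (1 - Real.exp (-t * (ξ00 w : ℝ))) / t ∂μ)
      (𝓝[>] 0) (𝓝 mval) := by
    rw [← hmval]
    refine tendsto_integral_filter_of_dominated_convergence (fun w => (ξ00 w : ℝ))
      ?_ ?_ hint ?_
    · filter_upwards with t
      exact ((measurable_const.sub (Real.measurable_exp.comp (measurable_const.mul
        ((Measurable.of_discrete (f := fun j : ℕ => (j:ℝ))).comp hm)))).div_const t).aestronglyMeasurable
    · filter_upwards [self_mem_nhdsWithin] with t ht
      filter_upwards with w
      have hk : (0:ℝ) ≤ (ξ00 w : ℝ) := Nat.cast_nonneg _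
      have ht0 : (0:ℝ) < t := ht
      have h1 : Real.exp (-t * (ξ00 w : ℝ)) ≤ 1 := by
        apply Real.exp_le_one_iff.mpr; nlinarith
      have h2 : 1 - t * (ξ00 w : ℝ) ≤ Real.exp (-t * (ξ00 w : ℝ)) := by
        have := Real.add_one_le_exp (-t * (ξ00 w : ℝ)); linarith
      rw [Real.norm_eq_abs, abs_of_nonneg (div_nonneg (by linarith) ht0.le)]
      rw [div_le_iff₀ ht0]
      nlinarith
    · filter_upwards with w
      have hk : (0:ℝ) ≤ (ξ00 w : ℝ) := Nat.cast_nonneg _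
      set c : ℝ := (ξ00 w : ℝ)
      have hder : HasDerivAt (fun t : ℝ => 1 - Real.exp (-t * c)) c 0 := by
        have h1 : HasDerivAt (fun t : ℝ => -t * c) (-c) 0 := by
          simpa using ((hasDerivAt_id (0:ℝ)).neg.mul_const c)
        have h2 := h1.exp
        simp only [neg_zero, zero_mul, Real.exp_zero, one_mul] at h2
        simpa using (h2.const_sub 1)
      have := hasDerivAt_iff_tendsto_slope.mp hder
      have hmono : 𝓝[>] (0:ℝ) ≤ 𝓝[≠] (0:ℝ) :=
        nhdsWithin_mono 0 (fun x hx => ne_of_gt hx)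
      refine (this.mono_left hmono).congr' ?_
      filter_upwards [self_mem_nhdsWithin] with t ht
      have ht0 : t ≠ 0 := ne_of_gt ht
      rw [slope_def_field]
      simp [Real.exp_zero]
  have hev : ∀ᶠ t in 𝓝[>] (0:ℝ),
      mval - ε/2 < ∫ w, (1 - Real.exp (-t * (ξ00 w : ℝ))) / t ∂μ :=
    hDCT.eventually (eventually_gt_nhds (by linarith))
  obtain ⟨t, htm, ht0⟩ := (hev.and self_mem_nhdsWithin).exists
  have ht0' : (0:ℝ) < t := ht0
  refine ⟨Real.exp (-t), Real.exp_pos _, Real.exp_lt_one_iff.mpr (by linarith), ?_⟩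
  have hexpint : Integrable (fun w => Real.exp (-t * (ξ00 w : ℝ))) μ := by
    refine integrable_bdd01 ?_ (fun w => (Real.exp_pos _).le) ?_
    · exact (Real.measurable_exp.comp (measurable_const.mul
        ((Measurable.of_discrete (f := fun j : ℕ => (j:ℝ))).comp hm)))
    · intro w
      apply Real.exp_le_one_iff.mpr
      have : (0:ℝ) ≤ (ξ00 w : ℝ) := Nat.cast_nonneg _
      nlinarith
  have heq : (fun w => Real.exp (-t) ^ ξ00 w) = fun w => Real.exp (-t * (ξ00 w : ℝ)) := by
    funext w
    rw [← Real.exp_nat_mul]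
    congr 1; push_cast; ring
  have hgval : ∫ w, Real.exp (-t) ^ ξ00 w ∂μ < 1 - t * (mval - ε/2) := by
    rw [heq]
    have hcompute : ∫ w, (1 - Real.exp (-t * (ξ00 w : ℝ))) / t ∂μ =
        (1 - ∫ w, Real.exp (-t * (ξ00 w : ℝ)) ∂μ) / t := by
      rw [integral_div, integral_sub (integrable_const 1) hexpint, integral_const]
      simp
    rw [hcompute] at htm
    have h3 : (mval - ε/2) * t < 1 - ∫ w, Real.exp (-t * (ξ00 w : ℝ)) ∂μ :=
      (lt_div_iff₀ ht0').mp htm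
    linarith
  have hrpow : Real.exp (-t) ^ (mval - ε) = Real.exp (-t * (mval - ε)) := by
    rw [Real.rpow_def_of_pos (Real.exp_pos _), Real.log_exp]
  rw [hrpow]
  have : 1 - t * (mval - ε) ≤ Real.exp (-t * (mval - ε)) := by
    have := Real.add_one_le_exp (-t * (mval - ε)); linarith
  have hlt : 1 - t * (mval - ε/2) < 1 - t * (mval - ε) := by nlinarith
  linarith

lemma measure_event_le (ξ : ℕ → ℕ → Ω → ℕ) (hξmeas : ∀ n i, Measurable (ξ n i))
    (hξiid : iIndepFun (fun ni : ℕ × ℕ => ξ ni.1 ni.2) μ)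
    (Z : ℕ → Ω → ℕ) (hZ0 : ∀ w, Z 0 w = 1)
    (hZrec : ∀ n w, Z (n + 1) w = ∑ i ∈ Finset.range (Z n w), ξ n i w)
    (m ε ρ : ℝ) (hρ0 : 0 ≤ ρ) (hρ1 : ρ < 1) (n : ℕ)
    (hq : ∀ k, (μ {w | ((∑ i ∈ Finset.range k, ξ n i w : ℕ) : ℝ) ≤ (m - ε) * k}).toReal ≤ ρ ^ k) :
    (μ {w | ε ≤ m - (Z (n+1) w : ℝ) / (Z n w : ℝ)}).toReal ≤
      ∑' k, (μ {w | Z n w = k}).toReal * ρ ^ k := by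
  set E := {w | ε ≤ m - (Z (n+1) w : ℝ) / (Z n w : ℝ)} with hE
  have hZm : Measurable (Z n) := meas_Z ξ hξmeas Z hZ0 hZrec n
  have hZm1 : Measurable (Z (n+1)) := meas_Z ξ hξmeas Z hZ0 hZrec (n+1)
  have hEm : MeasurableSet E := by
    have hmf : Measurable (fun w => m - (Z (n+1) w : ℝ) / (Z n w : ℝ)) :=
      measurable_const.sub
        (((Measurable.of_discrete (f := fun j : ℕ => (j:ℝ))).comp hZm1).div
          ((Measurable.of_discrete (f := fun j : ℕ => (j:ℝ))).comp hZm))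
    exact measurableSet_le measurable_const hmf
  set A : ℕ → Set Ω := fun k => {w | Z n w = k} with hA
  have mA : ∀ k, MeasurableSet (A k) := fun k => hZm (measurableSet_singleton k)
  have hdisjE : Pairwise (Function.onFun Disjoint (fun k => E ∩ A k)) := by
    intro i j hij
    rw [Function.onFun, Set.disjoint_left]
    rintro w ⟨_, h1⟩ ⟨_, h2⟩; exact hij ((h1 : Z n w = i).symm.trans h2)
  have hcover : E = ⋃ k, E ∩ A k := by
    ext w; simp [hA]
  have hmeasE : μ E = ∑' k, μ (E ∩ A k) := by
    have h := measure_iUnion (μ := μ) hdisjE (fun k => hEm.inter (mA k))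
    rw [← hcover] at h; exact h
  have htoReal : (μ E).toReal = ∑' k, (μ (E ∩ A k)).toReal := by
    rw [hmeasE, ENNReal.tsum_toReal_eq (fun k => measure_ne_top μ _)]
  have hPle1 : ∀ s : Set Ω, (μ s).toReal ≤ 1 := by
    intro s
    simpa using ENNReal.toReal_mono ENNReal.one_ne_top (prob_le_one (μ := μ) (s := s))
  have hterm : ∀ k, (μ (E ∩ A k)).toReal ≤ (μ (A k)).toReal * ρ ^ k := by
    intro k
    rcases Nat.eq_zero_or_pos k with hk | hk
    · subst hk
      simp only [pow_zero, mul_one]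
      exact ENNReal.toReal_mono (measure_ne_top μ _) (measure_mono inter_subset_right)
    · set B : Set Ω := {w | ((∑ i ∈ Finset.range k, ξ n i w : ℕ) : ℝ) ≤ (m - ε) * k} with hB
      have hsub : E ∩ A k ⊆ A k ∩ B := by
        rintro w ⟨hwE, hwA⟩
        refine ⟨hwA, ?_⟩
        have hZk : Z n w = k := hwA
        have hk0 : (0:ℝ) < (k:ℝ) := by exact_mod_cast hk
        have hZn1 : (Z (n+1) w : ℝ) = ((∑ i ∈ Finset.range k, ξ n i w : ℕ) : ℝ) := by
          rw [hZrec n w, hZk]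
        have hcast : ((Z n w : ℕ) : ℝ) = (k : ℝ) := by exact_mod_cast congrArg Nat.cast hZk
        have hwE' : ε ≤ m - (Z (n+1) w : ℝ) / (k : ℝ) := by
          have : ε ≤ m - (Z (n+1) w : ℝ) / (Z n w : ℝ) := hwE
          rwa [hcast] at this
        have hdiv : (Z (n+1) w : ℝ) / (k:ℝ) ≤ m - ε := by linarith
        have := (div_le_iff₀ hk0).mp hdiv
        show ((∑ i ∈ Finset.range k, ξ n i w : ℕ) : ℝ) ≤ (m - ε) * k
        rw [← hZn1]; linarith
      have hindep : IndepFun (Z n) (fun w => ∑ i ∈ Finset.range k, ξ n i w) μ := by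
        refine indepFun_blocks ξ hξmeas hξiid
          (S := {q : ℕ × ℕ | q.1 < n}) (T := {q : ℕ × ℕ | q.1 = n}) ?_
          (meas_Z_blk ξ Z hZ0 hZrec n) (meas_sum_blk ξ n k (fun i _ => rfl))
        rw [Set.disjoint_left]; rintro ⟨a, b⟩ h1 h2
        simp only [mem_setOf_eq] at h1 h2; omega
      have hprod : μ (A k ∩ B) = μ (A k) * μ B := by
        have hset1 : Z n ⁻¹' {k} = A k := by ext w; simp [hA]
        have hset2 : (fun w => ∑ i ∈ Finset.range k, ξ n i w) ⁻¹'
            {j : ℕ | (j : ℝ) ≤ (m - ε) * k} = B := by ext w; simp [hB]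
        have h := hindep.measure_inter_preimage_eq_mul {k}
          {j : ℕ | (j : ℝ) ≤ (m - ε) * k} (measurableSet_singleton k)
          MeasurableSet.of_discrete
        rw [hset1, hset2] at h; exact h
      calc (μ (E ∩ A k)).toReal ≤ (μ (A k ∩ B)).toReal :=
            ENNReal.toReal_mono (measure_ne_top μ _) (measure_mono hsub)
        _ = (μ (A k)).toReal * (μ B).toReal := by rw [hprod, ENNReal.toReal_mul]
        _ ≤ (μ (A k)).toReal * ρ ^ k :=
            mul_le_mul_of_nonneg_left (hq k) ENNReal.toReal_nonneg
  rw [htoReal]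
  refine Summable.tsum_le_tsum hterm ?_ ?_
  · refine ENNReal.summable_toReal ?_
    rw [← hmeasE]; exact measure_ne_top μ _
  · refine Summable.of_nonneg_of_le
      (fun k => mul_nonneg ENNReal.toReal_nonneg (pow_nonneg hρ0 _)) (fun k => ?_)
      (summable_geometric_of_lt_one hρ0 hρ1)
    calc (μ (A k)).toReal * ρ ^ k ≤ 1 * ρ ^ k :=
          mul_le_mul_of_nonneg_right (hPle1 _) (pow_nonneg hρ0 _)
      _ = ρ ^ k := one_mul _

lemma iterate_bound (g : ℝ → ℝ) {p1 ρ η : ℝ} (hρ0 : 0 ≤ ρ) (hρ1 : ρ < 1)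
    (hp10 : 0 ≤ p1) (hη : 0 < η) (hpη : p1 + η < 1)
    (hnonneg : ∀ s : ℝ, 0 ≤ s → 0 ≤ g s)
    (hquad : ∀ s : ℝ, 0 ≤ s → s ≤ 1 → g s ≤ s * (p1 + (1 - p1) * s)) :
    ∃ C : ℝ, 0 < C ∧ ∀ n, g^[n] ρ ≤ C * (p1 + η) ^ n := by
  have hp11 : p1 < 1 := by linarith
  set u : ℕ → ℝ := fun n => g^[n] ρ with hu
  have husucc : ∀ n, u (n+1) = g (u n) := fun n => Function.iterate_succ_apply' g n ρ
  have h01 : ∀ n, 0 ≤ u n ∧ u n ≤ ρ := by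
    intro n
    induction n with
    | zero => exact ⟨hρ0, le_refl ρ⟩
    | succ n ih =>
        obtain ⟨h0, h1⟩ := ih
        refine ⟨by rw [husucc]; exact hnonneg _ h0, ?_⟩
        rw [husucc]
        have hq := hquad (u n) h0 (h1.trans hρ1.le)
        nlinarith [mul_nonneg h0 (mul_nonneg (show (0:ℝ) ≤ 1 - p1 by linarith)
          (show (0:ℝ) ≤ 1 - u n by nlinarith))]
  have hdec : ∀ n, u (n+1) ≤ u n := by
    intro n
    obtain ⟨h0, h1⟩ := h01 n
    rw [husucc]
    have hq := hquad (u n) h0 (h1.trans hρ1.le)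
    nlinarith [mul_nonneg h0 (mul_nonneg (show (0:ℝ) ≤ 1 - p1 by linarith)
      (show (0:ℝ) ≤ 1 - u n by nlinarith))]
  have hanti : ∀ a b : ℕ, a ≤ b → u b ≤ u a := by
    intro a b hab
    induction b with
    | zero => rw [Nat.le_zero.mp hab]
    | succ b ih =>
        rcases Nat.lt_or_ge a (b+1) with h | h
        · exact (hdec b).trans (ih (by omega))
        · have hab' : a = b + 1 := by omega
          rw [hab']
  set r : ℝ := p1 + (1 - p1) * ρ with hr
  have hr0 : 0 ≤ r := by nlinarith
  have hr1 : r < 1 := by nlinarith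
  have hgeom : ∀ n, u n ≤ ρ * r ^ n := by
    intro n
    induction n with
    | zero => simpa using (h01 0).2
    | succ n ih =>
        obtain ⟨h0, h1⟩ := h01 n
        rw [husucc]
        have hq := hquad (u n) h0 (h1.trans hρ1.le)
        have hstep : g (u n) ≤ r * u n := by
          nlinarith [mul_nonneg (mul_nonneg (show (0:ℝ) ≤ 1 - p1 by linarith) h0)
            (show (0:ℝ) ≤ ρ - u n by linarith)]
        calc g (u n) ≤ r * u n := hstep
          _ ≤ r * (ρ * r ^ n) := mul_le_mul_of_nonneg_left ih hr0
          _ = ρ * r ^ (n+1) := by ring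
  have htend : Tendsto (fun n : ℕ => ρ * r ^ n) atTop (𝓝 0) := by
    simpa using (tendsto_pow_atTop_nhds_zero_of_lt_one hr0 hr1).const_mul ρ
  have hpos : (0:ℝ) < η / (1 - p1) := div_pos hη (by linarith)
  obtain ⟨j, hj⟩ := (htend.eventually (eventually_le_nhds hpos)).exists
  have huj : u j ≤ η / (1 - p1) := (hgeom j).trans hj
  have hpη0 : (0:ℝ) < p1 + η := by linarith
  have hstep2 : ∀ d, u (j + d) ≤ ρ * (p1 + η) ^ d := by
    intro d
    induction d with
    | zero => simpa using (h01 j).2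
    | succ d ih =>
        have h0 := (h01 (j+d)).1
        have h1 := (h01 (j+d)).2
        have hq := hquad (u (j+d)) h0 (h1.trans hρ1.le)
        have hun : u (j+d) ≤ η / (1 - p1) :=
          le_trans (hanti j (j+d) (Nat.le_add_right _ _)) huj
        have hmul : u (j+d) * (1 - p1) ≤ η := (le_div_iff₀ (by linarith)).mp hun
        have hkey : g (u (j+d)) ≤ u (j+d) * (p1 + η) := by nlinarith
        calc u (j + (d+1)) = g (u (j+d)) := husucc (j+d)
          _ ≤ u (j+d) * (p1 + η) := hkey
          _ ≤ (ρ * (p1+η)^d) * (p1+η) := mul_le_mul_of_nonneg_right ih hpη0.le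
          _ = ρ * (p1+η)^(d+1) := by ring
  refine ⟨ρ / (p1+η)^j + 1, by positivity, ?_⟩
  intro n
  rcases Nat.lt_or_ge n j with h | h
  · have h1 : u n ≤ ρ := (h01 n).2
    have h2 : (p1+η)^j ≤ (p1+η)^n := pow_le_pow_of_le_one hpη0.le hpη.le h.le
    have h3 : (0:ℝ) < (p1+η)^j := pow_pos hpη0 j
    have h4 : ρ ≤ ρ / (p1+η)^j * (p1+η)^n := by
      rw [div_mul_eq_mul_div, le_div_iff₀ h3]
      exact mul_le_mul_of_nonneg_left h2 hρ0
    have h5 : (0:ℝ) ≤ (p1+η)^n := (pow_pos hpη0 n).le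
    calc u n ≤ ρ := h1
      _ ≤ ρ / (p1+η)^j * (p1+η)^n := h4
      _ ≤ (ρ / (p1+η)^j + 1) * (p1+η)^n := by nlinarith
  · have hd : j + (n - j) = n := by omega
    have h6 := hstep2 (n - j)
    rw [hd] at h6
    have h3 : (0:ℝ) < (p1+η)^j := pow_pos hpη0 j
    have hsplit : (p1+η)^n = (p1+η)^j * (p1+η)^(n-j) := by
      rw [← pow_add]; congr 1; omega
    have hcancel : ρ / (p1+η)^j * ((p1+η)^j * (p1+η)^(n-j)) = ρ * (p1+η)^(n-j) := by
      rw [div_mul_eq_mul_div, mul_comm ((p1+η)^j) ((p1+η)^(n-j)), ← mul_assoc,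
        mul_div_assoc, div_self (ne_of_gt h3), mul_one]
    calc u n ≤ ρ * (p1+η)^(n-j) := h6
      _ ≤ (ρ / (p1+η)^j + 1) * (p1+η)^n := by
          rw [hsplit]
          nlinarith [hcancel, pow_pos hpη0 (n-j), pow_pos hpη0 j, mul_pos h3 (pow_pos hpη0 (n-j))]

lemma slow_var (L : ℝ → ℝ) (m : ℝ) (hm : 1 < m) (hLpos : ∀ x : ℝ, 0 < x → 0 < L x)
    (hL : Tendsto (fun x : ℝ => L (m * x) / L x) atTop (𝓝 1)) {lam : ℝ} (hlam : 1 < lam) :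
    ∃ C : ℝ, 0 < C ∧ ∀ᶠ n : ℕ in atTop, 1 / L (m ^ n) ≤ C * lam ^ n := by
  have hm0 : (0:ℝ) < m := by linarith
  have hlam0 : (0:ℝ) < lam := by linarith
  have hx : Tendsto (fun n : ℕ => m ^ n) atTop atTop := tendsto_pow_atTop_atTop_of_one_lt hm
  have hcomp : Tendsto (fun n : ℕ => L (m * m ^ n) / L (m ^ n)) atTop (𝓝 1) := hL.comp hx
  have hlaminv : 1/lam < 1 := by rw [div_lt_one hlam0]; exact hlam
  have hev : ∀ᶠ n : ℕ in atTop, 1/lam < L (m * m ^ n) / L (m ^ n) :=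
    hcomp.eventually (eventually_gt_nhds hlaminv)
  obtain ⟨N, hN⟩ := eventually_atTop.mp hev
  have key : ∀ n, N ≤ n → lam ^ N * L (m ^ N) ≤ lam ^ n * L (m ^ n) := by
    intro n hn
    induction n with
    | zero =>
        have : N = 0 := Nat.le_zero.mp hn
        rw [this]
    | succ n ih =>
        rcases Nat.lt_or_ge N (n+1) with h | h
        · have hNn : N ≤ n := by omega
          refine (ih hNn).trans ?_
          have hrat := hN n hNn
          have hLn : 0 < L (m ^ n) := hLpos _ (pow_pos hm0 n)
          have hstep : L (m ^ n) / lam < L (m ^ (n+1)) := by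
            have h' := (lt_div_iff₀ hLn).mp hrat
            have hmm : m * m ^ n = m ^ (n+1) := by rw [pow_succ]; ring
            rw [hmm] at h'
            calc L (m ^ n) / lam = 1/lam * L (m ^ n) := by ring
              _ < L (m ^ (n+1)) := h'
          have hlp : (0:ℝ) < lam ^ n := pow_pos hlam0 n
          have : lam ^ n * L (m ^ n) ≤ lam ^ (n+1) * (L (m ^ n) / lam) := by
            have heq : lam ^ (n+1) * (L (m ^ n) / lam) = lam ^ n * L (m ^ n) := by
              rw [pow_succ]
              field_simp
            rw [heq]
          refine this.trans ?_
          have : lam ^ (n+1) * (L (m ^ n) / lam) ≤ lam ^ (n+1) * L (m ^ (n+1)) :=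
            mul_le_mul_of_nonneg_left hstep.le (pow_pos hlam0 (n+1)).le
          exact this
        · have hab' : N = n + 1 := by omega
          rw [hab']
  set c0 : ℝ := lam ^ N * L (m ^ N) with hc0
  have hc0pos : 0 < c0 := mul_pos (pow_pos hlam0 N) (hLpos _ (pow_pos hm0 N))
  refine ⟨1 / c0, by positivity, ?_⟩
  rw [eventually_atTop]
  refine ⟨N, fun n hn => ?_⟩
  have hLn : 0 < L (m ^ n) := hLpos _ (pow_pos hm0 n)
  have hk := key n hn
  rw [div_le_iff₀ hLn]
  have h2 : (1 / c0 * lam ^ n) * L (m ^ n) = (lam ^ n * L (m ^ n)) / c0 := by ring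
  rw [h2, le_div_iff₀ hc0pos, one_mul]
  exact hk

end LNaux

theorem lotka_nagaev_lower_deviation_rate
    {Ω : Type} [MeasurableSpace Ω] (μ : Measure Ω) [IsProbabilityMeasure μ]
    -- the offspring variables: `ξ n i` is the number of children of the `i`-th
    -- individual of generation `n`; they are i.i.d. with law `p`
    (ξ : ℕ → ℕ → Ω → ℕ) (hξmeas : ∀ n i, Measurable (ξ n i))
    (hξiid : iIndepFun (fun ni : ℕ × ℕ => ξ ni.1 ni.2) μ)
    (p : ℕ → ℝ) (hξdist : ∀ n i k, (μ {w | ξ n i w = k}).toReal = p k)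
    -- the Galton-Watson process
    (Z : ℕ → Ω → ℕ) (hZ0 : ∀ w, Z 0 w = 1)
    (hZrec : ∀ n w, Z (n + 1) w = ∑ i ∈ Finset.range (Z n w), ξ n i w)
    (hp0 : p 0 = 0) (hp1pos : 0 < p 1) (hp1lt : p 1 < 1)
    -- the offspring mean `m = E[Z₁] ∈ (1, ∞)` and `E[Z₁ log Z₁] < ∞`
    (m : ℝ) (hm1 : 1 < m) (hmdef : ∫ w, (Z 1 w : ℝ) ∂μ = m)
    (hZlogZ : Integrable (fun w => (Z 1 w : ℝ) * Real.log (Z 1 w)) μ)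
    -- the Schröder constant `γ > 0`, defined by `p₁ = m ^ (-γ)`
    (γ : ℝ) (hγpos : 0 < γ) (hγdef : p 1 = m ^ (-γ))
    -- the martingale limit `W = lim Zₙ / mⁿ`, with continuous density `ω0` on `(0, ∞)`
    (W : Ω → ℝ) (hW : ∀ᵐ w ∂μ, Tendsto (fun n : ℕ => (Z n w : ℝ) / m ^ (n : ℝ)) atTop (𝓝 (W w)))
    (ω0 : ℝ → ℝ) (hω0cont : ContinuousOn ω0 (Ioi 0)) (hω0nonneg : ∀ u : ℝ, 0 < u → 0 ≤ ω0 u)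
    (hWdens : ∀ x : ℝ, 0 ≤ x → (μ {w | x ≤ W w}).toReal = ∫ u in Ioi x, ω0 u)
    -- regularly varying tail of the offspring law: `P(Z₁ > x) ~ x^(-β) L(x)`
    (β : ℝ) (L : ℝ → ℝ) (hLpos : ∀ x : ℝ, 0 < x → 0 < L x)
    (hLslow : ∀ c : ℝ, 0 < c → Tendsto (fun x => L (c * x) / L x) atTop (𝓝 1))
    (htailZ : Tendsto (fun x : ℝ =>
      (μ {w | x < (Z 1 w : ℝ)}).toReal / (x ^ (-β) * L x)) atTop (𝓝 1))
    (hβ1 : 1 < β) (hβ2 : β < 2)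
    -- `X₁ = Z₁ - m` lies in the domain of attraction of a strictly `β`-stable law
    (b : ℝ → ℝ) (hbcont : Continuous b) (hbmono : StrictMonoOn b (Ici 0)) (hb0 : b 0 = 0)
    (s : ℝ → ℝ) (hbs : ∀ x : ℝ, 0 < x → b x = x ^ β⁻¹ * s x)
    (hsslow : ∀ c : ℝ, 0 < c → Tendsto (fun x => s (c * x) / s x) atTop (𝓝 1))
    (hsliminf : ∃ c : ℝ, 0 < c ∧ ∀ᶠ x in atTop, c ≤ s x)
    (U : Ω → ℝ) (hUmeas : Measurable U)
    (hconv : ∀ x : ℝ, ContinuousAt (fun y => (μ {w | U w ≤ y}).toReal) x →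
      Tendsto (fun k : ℕ => (μ {w | (∑ i ∈ Finset.range k, ((ξ 0 i w : ℝ) - m)) / b (k : ℝ) ≤ x}).toReal)
        atTop (𝓝 ((μ {w | U w ≤ x}).toReal)))
    (hstable : ∀ a c : ℝ, 0 < a → 0 < c →
      mconv (μ.map (fun w => a * U w)) (μ.map (fun w => c * U w)) =
        μ.map (fun w => (a ^ β + c ^ β) ^ β⁻¹ * U w))
    (hFratio : Filter.limsup (fun n : ℕ =>
      (μ {w | (ξ 0 0 w : ℝ) - m ≤ -(b (n : ℝ) / (Real.log (n : ℝ)) ^ β⁻¹)}).toReal /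
        (Real.log (n : ℝ) * (μ {w | (ξ 0 0 w : ℝ) - m ≤ -(b (n : ℝ))}).toReal)) atTop ≤ 1)
    (hγβ : γ > β - 1)
    :
    ∀ ε : ℝ, 0 < ε →
      Tendsto (fun n : ℕ =>
          m ^ ((β - 1) * (n : ℝ)) / L (m ^ (n : ℝ)) *
            (μ {w | ε ≤ m - (Z (n + 1) w : ℝ) / (Z n w : ℝ)}).toReal)
        atTop (𝓝 0) := by
  intro ε hε
  have hm0 : (0:ℝ) < m := by linarith
  have hZ1 : ∀ w, Z 1 w = ξ 0 0 w := by
    intro w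
    rw [hZrec 0 w, hZ0 w, Finset.sum_range_one]
  have hmean : ∫ w, (ξ 0 0 w : ℝ) ∂μ = m := by
    rw [← hmdef]
    congr 1; funext w; rw [hZ1 w]
  have hintξ : Integrable (fun w => (ξ 0 0 w : ℝ)) μ := by
    by_contra h
    rw [integral_undef h] at hmean
    linarith
  have hξ0 : μ {w | ξ 0 0 w = 0} = 0 := by
    have h := hξdist 0 0 0
    rw [hp0] at h
    exact ((ENNReal.toReal_eq_zero_iff _).mp h).resolve_right (measure_ne_top μ _)
  obtain ⟨s0, hs00, hs01, hs0lt⟩ := LNaux.exists_s0 (μ := μ) (hξmeas 0 0) hintξ hmean hε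
  have hrpowpos : (0:ℝ) < s0 ^ (m - ε) := Real.rpow_pos_of_pos hs00 _
  set ρ : ℝ := (∫ w, s0 ^ ξ 0 0 w ∂μ) / s0 ^ (m - ε) with hρ
  have hρ0 : 0 ≤ ρ := div_nonneg (LNaux.g_nonneg hs00.le) hrpowpos.le
  have hρ1 : ρ < 1 := (div_lt_one hrpowpos).mpr hs0lt
  have hq : ∀ n k,
      (μ {w | ((∑ i ∈ Finset.range k, ξ n i w : ℕ) : ℝ) ≤ (m - ε) * k}).toReal ≤ ρ ^ k :=
    fun n k => LNaux.chernoff ξ hξmeas hξiid p hξdist hs00 hs01 (m - ε) n k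
  set G : ℝ → ℝ := fun u => ∫ v, u ^ ξ 0 0 v ∂μ with hG
  have hPn : ∀ n, (μ {w | ε ≤ m - (Z (n + 1) w : ℝ) / (Z n w : ℝ)}).toReal ≤ G^[n] ρ := by
    intro n
    have h1 := LNaux.measure_event_le ξ hξmeas hξiid Z hZ0 hZrec m ε ρ hρ0 hρ1 n (hq n)
    have h2 : ∑' k, (μ {w | Z n w = k}).toReal * ρ ^ k = ∫ w, ρ ^ (Z n w) ∂μ :=
      (LNaux.integral_comp_Z (LNaux.meas_Z ξ hξmeas Z hZ0 hZrec n) (fun k => ρ ^ k)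
        (fun k => pow_nonneg hρ0 _) (fun k => pow_le_one₀ hρ0 hρ1.le)).symm
    have h3 : ∫ w, ρ ^ (Z n w) ∂μ = G^[n] ρ :=
      LNaux.G_iterate ξ hξmeas hξiid p hξdist Z hZ0 hZrec n ρ hρ0 hρ1.le
    exact le_of_le_of_eq h1 (h2.trans h3)
  have hμ1 : (μ {w | ξ 0 0 w = 1}).toReal = p 1 := hξdist 0 0 1
  have hGnonneg : ∀ u : ℝ, 0 ≤ u → 0 ≤ G u := fun u hu => LNaux.g_nonneg hu
  have hGquad : ∀ u : ℝ, 0 ≤ u → u ≤ 1 → G u ≤ u * (p 1 + (1 - p 1) * u) :=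
    fun u hu0 hu1 => LNaux.g_quad (hξmeas 0 0) hμ1 hξ0 hu0 hu1
  -- parameters
  set K : ℝ := m ^ (β - 1) with hK
  have hK1 : 1 < K := by
    rw [hK]
    exact Real.one_lt_rpow_iff_of_pos hm0 |>.mpr (Or.inl ⟨hm1, by linarith⟩)
  have hK0 : (0:ℝ) < K := lt_trans one_pos hK1
  set θ : ℝ := K * p 1 with hθ
  have hθval : θ = m ^ (β - 1 - γ) := by
    rw [hθ, hK, hγdef, ← Real.rpow_add hm0]
    congr 1
  have hθ1 : θ < 1 := by
    rw [hθval]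
    exact Real.rpow_lt_one_of_one_lt_of_neg hm1 (by linarith)
  have hθ0 : 0 < θ := by
    rw [hθval]; exact Real.rpow_pos_of_pos hm0 _
  set η : ℝ := (1 - θ) / (4 * K) with hη
  have hηpos : 0 < η := by
    apply div_pos
    · linarith
    · linarith
  have hKη : K * η = (1 - θ) / 4 := by
    rw [hη]
    field_simp
  set q0 : ℝ := (1 + 3 * θ) / 4 with hq0
  have hq00 : 0 < q0 := by rw [hq0]; linarith
  have hq01 : q0 < 1 := by rw [hq0]; linarith
  have hKpη : K * (p 1 + η) = q0 := by
    have h1 : K * (p 1 + η) = K * p 1 + K * η := by ring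
    rw [h1, ← hθ, hKη, hq0]; ring
  have hpη1 : p 1 + η < 1 := by
    have h : K * (p 1 + η) < K * 1 := by
      rw [hKpη, mul_one]; linarith
    exact lt_of_mul_lt_mul_left h hK0.le
  set lam : ℝ := (q0 + 1) / (2 * q0) with hlam
  have hlam1 : 1 < lam := by
    rw [hlam, lt_div_iff₀ (by linarith)]
    linarith
  have hlamq0 : lam * q0 = (q0 + 1) / 2 := by
    rw [hlam]
    field_simp
  obtain ⟨C1, hC1pos, hC1⟩ :=
    LNaux.iterate_bound G hρ0 hρ1 hp1pos.le hηpos hpη1 hGnonneg hGquad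
  obtain ⟨C2, hC2pos, hC2⟩ := LNaux.slow_var L m hm1 hLpos (hLslow m hm0) hlam1
  have hLposn : ∀ n : ℕ, 0 < L (m ^ n) := fun n => hLpos _ (pow_pos hm0 n)
  have hrw : ∀ n : ℕ, m ^ ((β - 1) * (n:ℝ)) = K ^ n := by
    intro n
    rw [hK, ← Real.rpow_natCast (m ^ (β - 1)) n, ← Real.rpow_mul hm0.le]
  have hrw2 : ∀ n : ℕ, m ^ ((n:ℝ)) = m ^ n := fun n => Real.rpow_natCast m n
  set qf : ℝ := K * lam * (p 1 + η) with hqf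
  have hqf1 : qf < 1 := by
    have : qf = lam * (K * (p 1 + η)) := by rw [hqf]; ring
    rw [this, hKpη, hlamq0]
    linarith
  have hqf0 : (0:ℝ) ≤ qf := by
    rw [hqf]
    have : (0:ℝ) < p 1 + η := by linarith [hp1pos]
    positivity
  have hgeo : Tendsto (fun n : ℕ => (C2 * C1) * qf ^ n) atTop (𝓝 0) := by
    simpa using (tendsto_pow_atTop_nhds_zero_of_lt_one hqf0 hqf1).const_mul (C2 * C1)
  have hbound : ∀ᶠ n : ℕ in atTop,
      m ^ ((β - 1) * (n : ℝ)) / L (m ^ (n : ℝ)) *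
        (μ {w | ε ≤ m - (Z (n + 1) w : ℝ) / (Z n w : ℝ)}).toReal ≤ (C2 * C1) * qf ^ n := by
    filter_upwards [hC2] with n hn
    have hP := hPn n
    have hPge : (0:ℝ) ≤ (μ {w | ε ≤ m - (Z (n + 1) w : ℝ) / (Z n w : ℝ)}).toReal :=
      ENNReal.toReal_nonneg
    have hiter := hC1 n
    rw [hrw n, hrw2 n]
    have h1 : K ^ n / L (m ^ n) ≤ K ^ n * (C2 * lam ^ n) := by
      rw [div_eq_mul_one_div]
      exact mul_le_mul_of_nonneg_left hn (pow_pos hK0 n).le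
    have h2 : (μ {w | ε ≤ m - (Z (n + 1) w : ℝ) / (Z n w : ℝ)}).toReal ≤ C1 * (p 1 + η) ^ n :=
      hP.trans hiter
    have hd0 : (0:ℝ) ≤ K ^ n / L (m ^ n) :=
      div_nonneg (pow_pos hK0 n).le (hLposn n).le
    calc K ^ n / L (m ^ n) *
          (μ {w | ε ≤ m - (Z (n + 1) w : ℝ) / (Z n w : ℝ)}).toReal
        ≤ (K ^ n * (C2 * lam ^ n)) * (C1 * (p 1 + η) ^ n) := by
          apply mul_le_mul h1 h2 hPge
          positivity
      _ = (C2 * C1) * qf ^ n := by rw [hqf, mul_pow, mul_pow]; ring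
  refine squeeze_zero' ?_ hbound hgeo
  filter_upwards with n
  apply mul_nonneg _ ENNReal.toReal_nonneg
  apply div_nonneg (Real.rpow_nonneg hm0.le _)
  rw [hrw2 n]
  exact (hLposn n).le
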